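/- For any one-state Turing machine, if during a computation the head is on a blank cell and all cells to that side (in the direction of δ(⊔)) are blank, and δ(⊔) = (⊔, L) (resp. (⊔, R)) moves the head further into the blank region, then the machine never halts. -/

import Mathlib

inductive Dir : Type
  | L | R
deriving DecidableEq

def Dir.move : Dir → ℤ
  | .L => -1
  | .R => 1

/-- A one-state Turing machine: a blank symbol, a set of halting symbols
(as a Boolean predicate) and a transition function on the tape alphabet. -/
structure OneStateTM (Γ : Type) where
  blank : Γ
  halt : Γ → Bool
  δ : Γ → Γ × Dir

/-- A configuration: a bi-infinite tape and a head position. -/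
structure Cfg (Γ : Type) where
  tape : ℤ → Γ
  pos : ℤ

/-- One step of the machine; `none` means the machine has halted
(the head reads a halting symbol). -/
def OneStateTM.step {Γ : Type} (M : OneStateTM Γ) (c : Cfg Γ) : Option (Cfg Γ) :=
  if M.halt (c.tape c.pos) then none
  else some ⟨Function.update c.tape c.pos (M.δ (c.tape c.pos)).1,
             c.pos + (M.δ (c.tape c.pos)).2.move⟩

/-- Initial tape: the input written in cells 0,…,len−1, blanks elsewhere. -/
def OneStateTM.initTape {Γ : Type} (M : OneStateTM Γ) (l : List Γ) : ℤ → Γ :=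
  fun i => if i < 0 then M.blank else l.getD i.toNat M.blank

/-- The machine halts starting from configuration `c`. -/
def OneStateTM.HaltsFrom {Γ : Type} (M : OneStateTM Γ) (c : Cfg Γ) : Prop :=
  ∃ n : ℕ, (fun o => Option.bind o M.step)^[n] (some c) = none

/-- The machine halts on input `l` (head initially on the leftmost input symbol). -/
def OneStateTM.HaltsOn {Γ : Type} (M : OneStateTM Γ) (l : List Γ) : Prop :=
  M.HaltsFrom ⟨M.initTape l, 0⟩

def TMInv {Γ : Type} (M : OneStateTM Γ) (c : Cfg Γ) : Prop :=
  (M.δ M.blank = (M.blank, Dir.L) ∧ ∀ i : ℤ, i ≤ c.pos → c.tape i = M.blank) ∨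
  (M.δ M.blank = (M.blank, Dir.R) ∧ ∀ i : ℤ, c.pos ≤ i → c.tape i = M.blank)

lemma inv_step {Γ : Type} (M : OneStateTM Γ) (c : Cfg Γ)
    (hb : M.halt M.blank = false) (h : TMInv M c) :
    ∃ c', M.step c = some c' ∧ TMInv M c' := by
  rcases h with ⟨hδ, hbl⟩ | ⟨hδ, hbl⟩
  · have hp : c.tape c.pos = M.blank := hbl _ le_rfl
    refine ⟨⟨c.tape, c.pos - 1⟩, ?_, ?_⟩
    · simp [OneStateTM.step, hp, hb, hδ, Dir.move, Function.update_eq_self, sub_eq_add_neg]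
    · exact Or.inl ⟨hδ, fun i hi => hbl i (by change i ≤ c.pos - 1 at hi; omega)⟩
  · have hp : c.tape c.pos = M.blank := hbl _ le_rfl
    refine ⟨⟨c.tape, c.pos + 1⟩, ?_, ?_⟩
    · simp [OneStateTM.step, hp, hb, hδ, Dir.move]
    · exact Or.inr ⟨hδ, fun i hi => hbl i (by change c.pos + 1 ≤ i at hi; omega)⟩

/-- if the head sits on a blank cell, all cells on the side toward
which δ(⊔) moves are blank, and δ(⊔) = (⊔, L) (resp. (⊔, R)), the machine never halts. -/
theorem never_halts_in_blank_region :
    ∀ (Γ : Type) (M : OneStateTM Γ) (c : Cfg Γ),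
      M.halt M.blank = false →
      c.tape c.pos = M.blank →
      ((M.δ M.blank = (M.blank, Dir.L) ∧ ∀ i : ℤ, i ≤ c.pos → c.tape i = M.blank) ∨
       (M.δ M.blank = (M.blank, Dir.R) ∧ ∀ i : ℤ, c.pos ≤ i → c.tape i = M.blank)) →
      ¬ M.HaltsFrom c := by
  intro Γ M c hb _ hinv ⟨n, hn⟩
  have key : ∀ m : ℕ, ∃ c', (fun o => Option.bind o M.step)^[m] (some c) = some c' ∧ TMInv M c' := by
    intro m
    induction m with
    | zero => exact ⟨c, rfl, hinv⟩
    | succ k ih =>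
      obtain ⟨c', hc', hi⟩ := ih
      obtain ⟨c'', hs, hi'⟩ := inv_step M c' hb hi
      exact ⟨c'', by rw [Function.iterate_succ_apply', hc']; simpa using hs, hi'⟩
  obtain ⟨c', hc', _⟩ := key n
  rw [hn] at hc'; cases hc'
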